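/- Let f* = f̄ be the conditional-mean regressor and r*(x) = 1{R(f*,x) ≤ c} the rejector that accepts exactly when the conditional risk of f* is at most c. Then for every measurable regressor f : 𝒳 → ℝ and every measurable rejector r : 𝒳 → {0,1}, L_RwR(f*, r*) ≤ L_RwR(f, r); i.e., the pair (f*, r*) minimizes the RwR loss over all measurable regressor–rejector pairs. -/

import Mathlib

open MeasureTheory

noncomputable section

/-- The regression-with-rejection (RwR) loss
`L_RwR(f,r) = E[ r(X)·(f(X)−Y)² + (1−r(X))·c ]`. -/
def LRwR {Ω : Type*} [MeasurableSpace Ω] {d : ℕ} (μ : Measure Ω)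
    (X : Ω → EuclideanSpace ℝ (Fin d)) (Y : Ω → ℝ) (c : ℝ)
    (f r : EuclideanSpace ℝ (Fin d) → ℝ) : ℝ :=
  ∫ ω, r (X ω) * (f (X ω) - Y ω) ^ 2 + (1 - r (X ω)) * c ∂μ

/-- `g : 𝒳 → ℝ` is a measurable version of the conditional expectation
`E[Z | X]`, i.e. `g(X) = E[Z | σ(X)]` a.s. -/
def IsCondMean {Ω : Type*} [MeasurableSpace Ω] {d : ℕ} (μ : Measure Ω)
    (X : Ω → EuclideanSpace ℝ (Fin d)) (Z : Ω → ℝ)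
    (g : EuclideanSpace ℝ (Fin d) → ℝ) : Prop :=
  (fun ω => g (X ω)) =ᵐ[μ] μ[Z | MeasurableSpace.comap X inferInstance]

/-- the pair `(f*, r*)`, with `f*` the conditional mean and
`r*(x) = 1{R(f*,x) ≤ c}`, minimizes the RwR loss over all measurable
regressor–rejector pairs. -/
theorem stmt0 {Ω : Type*} [MeasurableSpace Ω] {d : ℕ}
    (μ : Measure Ω) [IsProbabilityMeasure μ]
    (X : Ω → EuclideanSpace ℝ (Fin d)) (Y : Ω → ℝ)
    (hX : Measurable X) (hY : Measurable Y)
    (hY2 : Integrable (fun ω => (Y ω) ^ 2) μ)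
    (c : ℝ) (hc : 0 < c)
    (fstar : EuclideanSpace ℝ (Fin d) → ℝ) (hfstar_m : Measurable fstar)
    (hfstar : IsCondMean μ X Y fstar)
    (hfstar2 : Integrable (fun ω => (fstar (X ω) - Y ω) ^ 2) μ)
    (Rstar : EuclideanSpace ℝ (Fin d) → ℝ) (hRstar_m : Measurable Rstar)
    (hRstar : IsCondMean μ X (fun ω => (fstar (X ω) - Y ω) ^ 2) Rstar)
    (f : EuclideanSpace ℝ (Fin d) → ℝ) (hf : Measurable f)
    (hf2 : Integrable (fun ω => (f (X ω) - Y ω) ^ 2) μ)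
    (r : EuclideanSpace ℝ (Fin d) → ℝ) (hr_m : Measurable r)
    (hr01 : ∀ x, r x = 0 ∨ r x = 1) :
    LRwR μ X Y c fstar (fun x => if Rstar x ≤ c then 1 else 0) ≤ LRwR μ X Y c f r := by
  classical
  have hm : MeasurableSpace.comap X inferInstance ≤ ‹MeasurableSpace Ω› := hX.comap_le
  haveI : SigmaFinite (μ.trim hm) := by infer_instance
  have hXm : Measurable[MeasurableSpace.comap X inferInstance] X := measurable_iff_comap_le.mpr le_rfl
  -- integrability basics
  have hYint : Integrable Y μ := by
    refine ((integrable_const (1:ℝ)).add hY2).mono' hY.aestronglyMeasurable ?_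
    refine ae_of_all _ fun ω => ?_
    simp only [Real.norm_eq_abs, Pi.add_apply]
    nlinarith [sq_nonneg (|Y ω| - 1), sq_abs (Y ω), abs_nonneg (Y ω)]
  have hfXint : Integrable (fun ω => fstar (X ω)) μ :=
    (integrable_condExp (m := MeasurableSpace.comap X inferInstance)).congr hfstar.symm
  have hZint : Integrable (fun ω => fstar (X ω) - Y ω) μ := by
    refine ((integrable_const (1:ℝ)).add hfstar2).mono'
      ((hfstar_m.comp hX).sub hY).aestronglyMeasurable ?_
    refine ae_of_all _ fun ω => ?_
    simp only [Real.norm_eq_abs, Pi.add_apply]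
    nlinarith [sq_nonneg (|fstar (X ω) - Y ω| - 1), sq_abs (fstar (X ω) - Y ω),
      abs_nonneg (fstar (X ω) - Y ω)]
  have hRint : Integrable (fun ω => Rstar (X ω)) μ :=
    (integrable_condExp (m := MeasurableSpace.comap X inferInstance)).congr hRstar.symm
  -- the key pull-out identity for bounded rejector-like g
  have key : ∀ (g : EuclideanSpace ℝ (Fin d) → ℝ) (Z : Ω → ℝ)
      (W : EuclideanSpace ℝ (Fin d) → ℝ),
      Measurable g → (∀ x, ‖g x‖ ≤ 1) → Integrable Z μ →
      ((fun ω => W (X ω)) =ᵐ[μ] μ[Z | MeasurableSpace.comap X inferInstance]) →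
      ∫ ω, g (X ω) * Z ω ∂μ = ∫ ω, g (X ω) * W (X ω) ∂μ := by
    intro g Z W hg hgb hZ hW
    have hGm : StronglyMeasurable[MeasurableSpace.comap X inferInstance] (fun ω => g (X ω)) :=
      (hg.comp hXm).stronglyMeasurable
    have hGZ : Integrable (fun ω => g (X ω) * Z ω) μ :=
      hZ.bdd_mul (hg.comp hX).aestronglyMeasurable (ae_of_all _ fun ω => hgb _)
    have hpull : μ[(fun ω => g (X ω)) * Z | MeasurableSpace.comap X inferInstance]
        =ᵐ[μ] (fun ω => g (X ω)) * μ[Z | MeasurableSpace.comap X inferInstance] :=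
      condExp_mul_of_stronglyMeasurable_left hGm hGZ hZ
    calc ∫ ω, g (X ω) * Z ω ∂μ
        = ∫ ω, (μ[(fun ω => g (X ω)) * Z | MeasurableSpace.comap X inferInstance]) ω ∂μ :=
          (integral_condExp (μ := μ) (f := (fun ω => g (X ω)) * Z) hm).symm
      _ = ∫ ω, g (X ω) * W (X ω) ∂μ := by
          refine integral_congr_ae ?_
          filter_upwards [hpull, hW] with ω h1 h2
          simp only [Pi.mul_apply] at h1
          rw [h1, ← h2]
  -- conditional expectation of fstar(X) - Y is 0
  have hid : μ[(fun ω => fstar (X ω)) | MeasurableSpace.comap X inferInstance] = fun ω => fstar (X ω) :=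
    condExp_of_stronglyMeasurable (f := fun ω => fstar (X ω)) hm
      (hfstar_m.comp hXm).stronglyMeasurable hfXint
  have hZ0 : μ[(fun ω => fstar (X ω) - Y ω) | MeasurableSpace.comap X inferInstance] =ᵐ[μ] 0 := by
    have hsub : μ[(fun ω => fstar (X ω)) - Y | MeasurableSpace.comap X inferInstance]
        =ᵐ[μ] μ[(fun ω => fstar (X ω)) | MeasurableSpace.comap X inferInstance] - μ[Y | MeasurableSpace.comap X inferInstance] := condExp_sub hfXint hYint _
    have heq : (fun ω => fstar (X ω) - Y ω) = (fun ω => fstar (X ω)) - Y := rfl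
    rw [heq]
    filter_upwards [hsub, hfstar] with ω h1 h2
    rw [h1]
    simp only [Pi.sub_apply, Pi.zero_apply, hid]
    rw [h2]
    simp
  -- bound on r
  have hrb : ∀ x, ‖r x‖ ≤ 1 := by
    intro x; rcases hr01 x with h | h <;> simp [h]
  -- elementary inequality for the cross term bound
  have habs : ∀ a b : ℝ, |(a - b) * b| ≤ a ^ 2 + 2 * b ^ 2 := by
    intro a b
    rw [abs_le]
    constructor <;> nlinarith [sq_nonneg (a + b), sq_nonneg (a - b), sq_nonneg a, sq_nonneg b]
  -- cross term vanishes
  have hH_m : StronglyMeasurable[MeasurableSpace.comap X inferInstance] (fun ω => r (X ω) * (f (X ω) - fstar (X ω))) :=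
    ((hr_m.comp hXm).mul ((hf.comp hXm).sub (hfstar_m.comp hXm))).stronglyMeasurable
  have hHZint : Integrable
      (fun ω => (r (X ω) * (f (X ω) - fstar (X ω))) * (fstar (X ω) - Y ω)) μ := by
    refine (hf2.add (hfstar2.const_mul 2)).mono'
      (((hr_m.comp hX).mul ((hf.comp hX).sub (hfstar_m.comp hX))).mul
        ((hfstar_m.comp hX).sub hY)).aestronglyMeasurable ?_
    refine ae_of_all _ fun ω => ?_
    simp only [Real.norm_eq_abs, Pi.add_apply]
    have hfd : f (X ω) - fstar (X ω) = (f (X ω) - Y ω) - (fstar (X ω) - Y ω) := by ring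
    rcases hr01 (X ω) with h | h
    · rw [h]
      simp only [zero_mul, abs_zero]
      positivity
    · rw [h, one_mul, hfd]
      exact habs _ _
  have hcross : ∫ ω, (r (X ω) * (f (X ω) - fstar (X ω))) * (fstar (X ω) - Y ω) ∂μ = 0 := by
    have hpull : μ[(fun ω => r (X ω) * (f (X ω) - fstar (X ω)))
        * (fun ω => fstar (X ω) - Y ω) | MeasurableSpace.comap X inferInstance]
        =ᵐ[μ] (fun ω => r (X ω) * (f (X ω) - fstar (X ω)))
          * μ[(fun ω => fstar (X ω) - Y ω) | MeasurableSpace.comap X inferInstance] :=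
      condExp_mul_of_stronglyMeasurable_left hH_m hHZint hZint
    calc ∫ ω, (r (X ω) * (f (X ω) - fstar (X ω))) * (fstar (X ω) - Y ω) ∂μ
        = ∫ ω, (μ[(fun ω => r (X ω) * (f (X ω) - fstar (X ω)))
            * (fun ω => fstar (X ω) - Y ω) | MeasurableSpace.comap X inferInstance]) ω ∂μ :=
          (integral_condExp (μ := μ)
            (f := (fun ω => r (X ω) * (f (X ω) - fstar (X ω)))
              * (fun ω => fstar (X ω) - Y ω)) hm).symm
      _ = ∫ ω, (0:ℝ) ∂μ := by
          refine integral_congr_ae ?_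
          filter_upwards [hpull, hZ0] with ω h1 h2
          simp only [Pi.mul_apply] at h1
          simp [h1, h2]
      _ = 0 := integral_zero _ _
  -- integrability pieces
  have hdiff2int : Integrable (fun ω => (f (X ω) - fstar (X ω)) ^ 2) μ := by
    refine ((hf2.const_mul 2).add (hfstar2.const_mul 2)).mono'
      (((hf.comp hX).sub (hfstar_m.comp hX)).pow_const 2).aestronglyMeasurable ?_
    refine ae_of_all _ fun ω => ?_
    simp only [Real.norm_eq_abs, Pi.add_apply]
    rw [abs_of_nonneg (sq_nonneg _)]
    nlinarith [sq_nonneg (f (X ω) - Y ω + (fstar (X ω) - Y ω)),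
      sq_nonneg (f (X ω) - Y ω - (fstar (X ω) - Y ω))]
  have hrfs2int : Integrable (fun ω => r (X ω) * (fstar (X ω) - Y ω) ^ 2) μ :=
    hfstar2.bdd_mul (hr_m.comp hX).aestronglyMeasurable (ae_of_all _ fun ω => hrb _)
  have hrf2int : Integrable (fun ω => r (X ω) * (f (X ω) - Y ω) ^ 2) μ :=
    hf2.bdd_mul (hr_m.comp hX).aestronglyMeasurable (ae_of_all _ fun ω => hrb _)
  have hrd2int : Integrable (fun ω => r (X ω) * (f (X ω) - fstar (X ω)) ^ 2) μ :=
    hdiff2int.bdd_mul (hr_m.comp hX).aestronglyMeasurable (ae_of_all _ fun ω => hrb _)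
  have hconst_int : ∀ (g : EuclideanSpace ℝ (Fin d) → ℝ), Measurable g →
      (∀ x, ‖g x‖ ≤ 1) → Integrable (fun ω => (1 - g (X ω)) * c) μ := by
    intro g hg hgb
    refine (integrable_const (2 * |c|)).mono'
      ((measurable_const.sub (hg.comp hX)).mul measurable_const).aestronglyMeasurable ?_
    refine ae_of_all _ fun ω => ?_
    have hb := hgb (X ω)
    simp only [Real.norm_eq_abs] at *
    rw [abs_mul]
    have h1 : |1 - g (X ω)| ≤ 2 := by
      rw [abs_le] at hb ⊢
      constructor <;> linarith [hb.1, hb.2]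
    exact mul_le_mul_of_nonneg_right h1 (abs_nonneg c)
  -- the regression step: replacing f by fstar under r only decreases the loss
  have hreg : ∫ ω, r (X ω) * (fstar (X ω) - Y ω) ^ 2 ∂μ
      ≤ ∫ ω, r (X ω) * (f (X ω) - Y ω) ^ 2 ∂μ := by
    have hdecomp : (fun ω => r (X ω) * (f (X ω) - Y ω) ^ 2)
        = fun ω => r (X ω) * (fstar (X ω) - Y ω) ^ 2
          + (r (X ω) * (f (X ω) - fstar (X ω)) ^ 2
            + 2 * ((r (X ω) * (f (X ω) - fstar (X ω))) * (fstar (X ω) - Y ω))) := by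
      funext ω; ring
    have e1 : ∫ ω, r (X ω) * (f (X ω) - Y ω) ^ 2 ∂μ
        = ∫ ω, r (X ω) * (fstar (X ω) - Y ω) ^ 2
          + (r (X ω) * (f (X ω) - fstar (X ω)) ^ 2
            + 2 * ((r (X ω) * (f (X ω) - fstar (X ω))) * (fstar (X ω) - Y ω))) ∂μ := by
      rw [hdecomp]
    have e2 : ∫ ω, r (X ω) * (fstar (X ω) - Y ω) ^ 2
          + (r (X ω) * (f (X ω) - fstar (X ω)) ^ 2
            + 2 * ((r (X ω) * (f (X ω) - fstar (X ω))) * (fstar (X ω) - Y ω))) ∂μ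
        = (∫ ω, r (X ω) * (fstar (X ω) - Y ω) ^ 2 ∂μ)
          + ∫ ω, r (X ω) * (f (X ω) - fstar (X ω)) ^ 2
            + 2 * ((r (X ω) * (f (X ω) - fstar (X ω))) * (fstar (X ω) - Y ω)) ∂μ :=
      integral_add hrfs2int (hrd2int.add (hHZint.const_mul 2))
    have e3 : ∫ ω, r (X ω) * (f (X ω) - fstar (X ω)) ^ 2
            + 2 * ((r (X ω) * (f (X ω) - fstar (X ω))) * (fstar (X ω) - Y ω)) ∂μ
        = (∫ ω, r (X ω) * (f (X ω) - fstar (X ω)) ^ 2 ∂μ)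
          + ∫ ω, 2 * ((r (X ω) * (f (X ω) - fstar (X ω))) * (fstar (X ω) - Y ω)) ∂μ :=
      integral_add hrd2int (hHZint.const_mul 2)
    have e4 : ∫ ω, 2 * ((r (X ω) * (f (X ω) - fstar (X ω))) * (fstar (X ω) - Y ω)) ∂μ
        = 2 * ∫ ω, (r (X ω) * (f (X ω) - fstar (X ω))) * (fstar (X ω) - Y ω) ∂μ :=
      integral_const_mul 2 _
    have h2 : 0 ≤ ∫ ω, r (X ω) * (f (X ω) - fstar (X ω)) ^ 2 ∂μ := by
      refine integral_nonneg fun ω => ?_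
      rcases hr01 (X ω) with h | h
      · simp [h]
      · rw [h, one_mul]; positivity
    linarith [e1, e2, e3, e4, hcross, h2]
  -- define rstar and its properties
  set rstar := fun x => if Rstar x ≤ c then (1:ℝ) else 0 with hrstar_def
  have hrstar_m : Measurable rstar :=
    Measurable.ite (hRstar_m measurableSet_Iic) measurable_const measurable_const
  have hrstarb : ∀ x, ‖rstar x‖ ≤ 1 := by
    intro x; simp only [hrstar_def]; split <;> simp
  have hrstar2int : Integrable (fun ω => rstar (X ω) * (fstar (X ω) - Y ω) ^ 2) μ :=
    hfstar2.bdd_mul (hrstar_m.comp hX).aestronglyMeasurable (ae_of_all _ fun ω => hrstarb _)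
  have hrstarRint : Integrable (fun ω => rstar (X ω) * Rstar (X ω)) μ :=
    hRint.bdd_mul (hrstar_m.comp hX).aestronglyMeasurable (ae_of_all _ fun ω => hrstarb _)
  have hrRint : Integrable (fun ω => r (X ω) * Rstar (X ω)) μ :=
    hRint.bdd_mul (hr_m.comp hX).aestronglyMeasurable (ae_of_all _ fun ω => hrb _)
  have hminint : Integrable (fun ω => min (Rstar (X ω)) c) μ :=
    hRint.inf (integrable_const (μ := μ) c)
  -- step 1: LHS equals the integral of min(Rstar, c)
  have step1 : LRwR μ X Y c fstar rstar = ∫ ω, min (Rstar (X ω)) c ∂μ := by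
    unfold LRwR
    rw [integral_add hrstar2int (hconst_int rstar hrstar_m hrstarb),
      key rstar _ Rstar hrstar_m hrstarb hfstar2 hRstar,
      ← integral_add hrstarRint (hconst_int rstar hrstar_m hrstarb)]
    refine integral_congr_ae (ae_of_all _ fun ω => ?_)
    simp only [hrstar_def]
    by_cases h : Rstar (X ω) ≤ c
    · simp [h, min_eq_left h]
    · simp [h, min_eq_right (le_of_not_ge h)]
  -- step 3: the r-part of RHS rewritten via Rstar
  have step3 : ∫ ω, r (X ω) * (fstar (X ω) - Y ω) ^ 2 + (1 - r (X ω)) * c ∂μ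
      = ∫ ω, r (X ω) * Rstar (X ω) + (1 - r (X ω)) * c ∂μ := by
    rw [integral_add hrfs2int (hconst_int r hr_m hrb),
      key r _ Rstar hr_m hrb hfstar2 hRstar,
      ← integral_add hrRint (hconst_int r hr_m hrb)]
  -- step 2: min(Rstar, c) ≤ r·Rstar + (1-r)·c pointwise
  have step2 : ∫ ω, min (Rstar (X ω)) c ∂μ
      ≤ ∫ ω, r (X ω) * Rstar (X ω) + (1 - r (X ω)) * c ∂μ := by
    refine integral_mono hminint (hrRint.add (hconst_int r hr_m hrb)) fun ω => ?_
    rcases hr01 (X ω) with h | h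
    · simp only [h, zero_mul, sub_zero, one_mul, zero_add]
      exact min_le_right _ _
    · simp only [h, one_mul, sub_self, zero_mul, add_zero]
      exact min_le_left _ _
  -- step 4: RHS comparison
  have step4 : ∫ ω, r (X ω) * (fstar (X ω) - Y ω) ^ 2 + (1 - r (X ω)) * c ∂μ
      ≤ LRwR μ X Y c f r := by
    unfold LRwR
    rw [integral_add hrfs2int (hconst_int r hr_m hrb),
      integral_add hrf2int (hconst_int r hr_m hrb)]
    linarith [hreg]
  calc LRwR μ X Y c fstar rstar
      = ∫ ω, min (Rstar (X ω)) c ∂μ := step1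
    _ ≤ ∫ ω, r (X ω) * Rstar (X ω) + (1 - r (X ω)) * c ∂μ := step2
    _ = ∫ ω, r (X ω) * (fstar (X ω) - Y ω) ^ 2 + (1 - r (X ω)) * c ∂μ := step3.symm
    _ ≤ LRwR μ X Y c f r := step4
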